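/- Let F be a field of characteristic not 2 and let M = [[a,b,c],[x,y,z],[u,v,w]] be the generic 3×3 matrix over R = F[a,b,c,x,y,z,u,v,w]. Then the ideal P_2(M) generated by all nine 2×2 subpermanents of M is not a radical ideal; specifically, c·y·u lies in the radical of P_2(M) but not in P_2(M). -/
import Mathlib


open MvPolynomial

namespace PermAux

variable {F : Type*} [Field F]

abbrev V := Fin 3 × Fin 3

/-- exponent vector of the permutation monomial `X (0,j0) * X (1,j1) * X (2,j2)` -/
noncomputable def pmon (j0 j1 j2 : Fin 3) : V →₀ ℕ :=
  Finsupp.single (0, j0) 1 + Finsupp.single (1, j1) 1 + Finsupp.single (2, j2) 1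

/-- signed sum of coefficients of the six permutation monomials -/
noncomputable def lam (p : MvPolynomial V F) : F :=
  coeff (pmon 0 1 2) p - coeff (pmon 1 0 2) p - coeff (pmon 2 1 0) p
    - coeff (pmon 0 2 1) p + coeff (pmon 1 2 0) p + coeff (pmon 2 0 1) p

lemma lam_add (p q : MvPolynomial V F) : lam (p + q) = lam p + lam q := by
  simp only [lam, coeff_add]; ring

lemma missX (m : V →₀ ℕ) (s : V) (g : MvPolynomial V F) (h : m s = 0) :
    coeff m (g * X s) = 0 := by
  classical
  rw [coeff_mul_X', if_neg]
  simp [Finsupp.mem_support_iff, h]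

lemma pmon_apply (j0 j1 j2 i j : Fin 3) :
    pmon j0 j1 j2 (i, j) =
      (if i = 0 ∧ j = j0 then 1 else 0) + (if i = 1 ∧ j = j1 then 1 else 0)
        + (if i = 2 ∧ j = j2 then 1 else 0) := by
  simp [pmon, Finsupp.single_apply, Prod.ext_iff, eq_comm, and_comm]

end PermAux

section
variable {F : Type*} [Field F]
open PermAux

namespace PermAux

lemma pmon_eq01 (j0 j1 j2 : Fin 3) : pmon j0 j1 j2 =
    (Finsupp.single ((2:Fin 3), j2) 1 + Finsupp.single ((0:Fin 3), j0) 1) + Finsupp.single ((1:Fin 3), j1) 1 := by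
  unfold pmon; abel

lemma pmon_eq02 (j0 j1 j2 : Fin 3) : pmon j0 j1 j2 =
    (Finsupp.single ((1:Fin 3), j1) 1 + Finsupp.single ((0:Fin 3), j0) 1) + Finsupp.single ((2:Fin 3), j2) 1 := by
  unfold pmon; abel

lemma pmon_eq12 (j0 j1 j2 : Fin 3) : pmon j0 j1 j2 =
    (Finsupp.single ((0:Fin 3), j0) 1 + Finsupp.single ((1:Fin 3), j1) 1) + Finsupp.single ((2:Fin 3), j2) 1 :=
  rfl

lemma hit01 (f : MvPolynomial V F) (j0 j1 j2 : Fin 3) :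
    coeff (pmon j0 j1 j2) (f * X (0, j0) * X (1, j1)) = coeff (Finsupp.single (2, j2) 1) f := by
  rw [pmon_eq01, coeff_mul_X, coeff_mul_X]

lemma hit02 (f : MvPolynomial V F) (j0 j1 j2 : Fin 3) :
    coeff (pmon j0 j1 j2) (f * X (0, j0) * X (2, j2)) = coeff (Finsupp.single (1, j1) 1) f := by
  rw [pmon_eq02, coeff_mul_X, coeff_mul_X]

lemma hit12 (f : MvPolynomial V F) (j0 j1 j2 : Fin 3) :
    coeff (pmon j0 j1 j2) (f * X (1, j1) * X (2, j2)) = coeff (Finsupp.single (0, j0) 1) f := by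
  rw [pmon_eq12, coeff_mul_X, coeff_mul_X]

lemma hm01 (f : MvPolynomial V F) (j0 j1 j2 j : Fin 3) (h : j ≠ j0) :
    coeff (pmon j0 j1 j2) (f * X (0, j) * X (1, j1)) = 0 := by
  rw [pmon_eq01, coeff_mul_X]
  exact missX _ _ _ (by simp [Finsupp.add_apply, Finsupp.single_apply, Prod.ext_iff, (Ne.symm h)])

lemma hm02 (f : MvPolynomial V F) (j0 j1 j2 j : Fin 3) (h : j ≠ j0) :
    coeff (pmon j0 j1 j2) (f * X (0, j) * X (2, j2)) = 0 := by
  rw [pmon_eq02, coeff_mul_X]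
  exact missX _ _ _ (by simp [Finsupp.add_apply, Finsupp.single_apply, Prod.ext_iff, (Ne.symm h)])

lemma hm12 (f : MvPolynomial V F) (j0 j1 j2 j : Fin 3) (h : j ≠ j1) :
    coeff (pmon j0 j1 j2) (f * X (1, j) * X (2, j2)) = 0 := by
  rw [pmon_eq12, coeff_mul_X]
  exact missX _ _ _ (by simp [Finsupp.add_apply, Finsupp.single_apply, Prod.ext_iff, (Ne.symm h)])

lemma m1 (g : MvPolynomial V F) (j0 j1 j2 j : Fin 3) (h : j ≠ j1) :
    coeff (pmon j0 j1 j2) (g * X (1, j)) = 0 :=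
  missX _ _ _ (by rw [pmon_apply]; simp [h])

lemma m2 (g : MvPolynomial V F) (j0 j1 j2 j : Fin 3) (h : j ≠ j2) :
    coeff (pmon j0 j1 j2) (g * X (2, j)) = 0 :=
  missX _ _ _ (by rw [pmon_apply]; simp [h])


lemma pmon_eq10 (j0 j1 j2 : Fin 3) : pmon j0 j1 j2 =
    (Finsupp.single ((2:Fin 3), j2) 1 + Finsupp.single ((1:Fin 3), j1) 1) + Finsupp.single ((0:Fin 3), j0) 1 := by
  unfold pmon; abel

lemma pmon_eq20 (j0 j1 j2 : Fin 3) : pmon j0 j1 j2 =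
    (Finsupp.single ((1:Fin 3), j1) 1 + Finsupp.single ((2:Fin 3), j2) 1) + Finsupp.single ((0:Fin 3), j0) 1 := by
  unfold pmon; abel

lemma pmon_eq21 (j0 j1 j2 : Fin 3) : pmon j0 j1 j2 =
    (Finsupp.single ((0:Fin 3), j0) 1 + Finsupp.single ((2:Fin 3), j2) 1) + Finsupp.single ((1:Fin 3), j1) 1 := by
  unfold pmon; abel

lemma hit01' (f : MvPolynomial V F) (j0 j1 j2 : Fin 3) :
    coeff (pmon j0 j1 j2) (f * X (1, j1) * X (0, j0)) = coeff (Finsupp.single (2, j2) 1) f := by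
  rw [pmon_eq10, coeff_mul_X, coeff_mul_X]

lemma hit02' (f : MvPolynomial V F) (j0 j1 j2 : Fin 3) :
    coeff (pmon j0 j1 j2) (f * X (2, j2) * X (0, j0)) = coeff (Finsupp.single (1, j1) 1) f := by
  rw [pmon_eq20, coeff_mul_X, coeff_mul_X]

lemma hit12' (f : MvPolynomial V F) (j0 j1 j2 : Fin 3) :
    coeff (pmon j0 j1 j2) (f * X (2, j2) * X (1, j1)) = coeff (Finsupp.single (0, j0) 1) f := by
  rw [pmon_eq21, coeff_mul_X, coeff_mul_X]

lemma hm01' (f : MvPolynomial V F) (j0 j1 j2 j : Fin 3) (h : j ≠ j1) :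
    coeff (pmon j0 j1 j2) (f * X (1, j) * X (0, j0)) = 0 := by
  rw [pmon_eq10, coeff_mul_X]
  exact missX _ _ _ (by simp [Finsupp.add_apply, Finsupp.single_apply, Prod.ext_iff, (Ne.symm h)])

lemma hm02' (f : MvPolynomial V F) (j0 j1 j2 j : Fin 3) (h : j ≠ j2) :
    coeff (pmon j0 j1 j2) (f * X (2, j) * X (0, j0)) = 0 := by
  rw [pmon_eq20, coeff_mul_X]
  exact missX _ _ _ (by simp [Finsupp.add_apply, Finsupp.single_apply, Prod.ext_iff, (Ne.symm h)])

lemma hm12' (f : MvPolynomial V F) (j0 j1 j2 j : Fin 3) (h : j ≠ j2) :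
    coeff (pmon j0 j1 j2) (f * X (2, j) * X (1, j1)) = 0 := by
  rw [pmon_eq21, coeff_mul_X]
  exact missX _ _ _ (by simp [Finsupp.add_apply, Finsupp.single_apply, Prod.ext_iff, (Ne.symm h)])

lemma m0 (g : MvPolynomial V F) (j0 j1 j2 j : Fin 3) (h : j ≠ j0) :
    coeff (pmon j0 j1 j2) (g * X (0, j)) = 0 :=
  missX _ _ _ (by rw [pmon_apply]; simp [h])

lemma key (f : MvPolynomial V F) (i k j l : Fin 3) (hik : i < k) (hjl : j < l) :
    lam (f * (X (i, j) * X (k, l) + X (k, j) * X (i, l))) = 0 := by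
  fin_cases i <;> fin_cases k <;> fin_cases j <;> fin_cases l <;>
    first
      | exact absurd hik (by decide)
      | exact absurd hjl (by decide)
      | (simp only [Fin.mk_zero, Fin.mk_one, Fin.isValue, show (⟨2, by omega⟩ : Fin 3) = 2 from rfl,
           mul_add, lam, coeff_add, ← mul_assoc, hit01, hit02, hit12, hit01', hit02', hit12',
           hm01, hm02, hm12, hm01', hm02', hm12', m0, m1, m2,
           ne_eq, Fin.reduceEq, not_false_eq_true]
         ring)

end PermAux
end

namespace PermAux
variable {F : Type*} [Field F]

lemma lam_cyu : lam (X (0, 2) * X (1, 1) * X (2, 0) : MvPolynomial V F) = -1 := by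
  simp only [lam, hit12, hm12, m0, m1, m2, MvPolynomial.coeff_X,
    ne_eq, Fin.reduceEq, not_false_eq_true]
  norm_num

lemma lam_zero : lam (0 : MvPolynomial V F) = 0 := by simp [lam]

lemma lam_span (p : MvPolynomial V F)
    (hp : p ∈ Ideal.span {f : MvPolynomial V F |
      ∃ i k j l : Fin 3, i < k ∧ j < l ∧
        f = X (i, j) * X (k, l) + X (k, j) * X (i, l)}) :
    ∀ f : MvPolynomial V F, lam (f * p) = 0 := by
  refine Submodule.span_induction ?_ ?_ ?_ ?_ hp
  · rintro x ⟨i, k, j, l, hik, hjl, rfl⟩ f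
    exact key f i k j l hik hjl
  · intro f; rw [mul_zero, lam_zero]
  · intro x y _ _ hx hy f
    rw [mul_add, lam_add, hx f, hy f, add_zero]
  · intro r x _ hx f
    rw [smul_eq_mul, ← mul_assoc]
    exact hx (f * r)

end PermAux


/-- `M = [[a,b,c],[x,y,z],[u,v,w]]` generic 3×3 matrix over
`R = F[a,...,w]`, entry `(i,j)` being the variable `X (i,j)`;
`P₂(M)` is generated by the nine 2×2 subpermanents.  Then `P₂(M)` is not
radical: `c·y·u` lies in the radical of `P₂(M)` but not in `P₂(M)`. -/
theorem permanental_ideal_not_radical (F : Type*) [Field F] (h2 : (2 : F) ≠ 0) :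
    (X (0, 2) * X (1, 1) * X (2, 0) : MvPolynomial (Fin 3 × Fin 3) F) ∈
      (Ideal.span {f : MvPolynomial (Fin 3 × Fin 3) F |
        ∃ i k j l : Fin 3, i < k ∧ j < l ∧
          f = X (i, j) * X (k, l) + X (k, j) * X (i, l)}).radical ∧
    (X (0, 2) * X (1, 1) * X (2, 0) : MvPolynomial (Fin 3 × Fin 3) F) ∉
      Ideal.span {f : MvPolynomial (Fin 3 × Fin 3) F |
        ∃ i k j l : Fin 3, i < k ∧ j < l ∧
          f = X (i, j) * X (k, l) + X (k, j) * X (i, l)} ∧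
    ¬ (Ideal.span {f : MvPolynomial (Fin 3 × Fin 3) F |
        ∃ i k j l : Fin 3, i < k ∧ j < l ∧
          f = X (i, j) * X (k, l) + X (k, j) * X (i, l)}).IsRadical := by
  set R := MvPolynomial (Fin 3 × Fin 3) F
  set S : Set R := {f : R | ∃ i k j l : Fin 3, i < k ∧ j < l ∧
      f = X (i, j) * X (k, l) + X (k, j) * X (i, l)} with hS
  set I : Ideal R := Ideal.span S with hI
  -- notation for the matrix entries
  set a : R := X (0, 0); set b : R := X (0, 1); set c : R := X (0, 2)
  set x : R := X (1, 0); set y : R := X (1, 1); set z : R := X (1, 2)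
  set u : R := X (2, 0); set v : R := X (2, 1)
  -- the four generators we use
  have hg1 : a * y + x * b ∈ I := Ideal.subset_span ⟨0, 1, 0, 1, by decide, by decide, rfl⟩
  have hg2 : a * z + x * c ∈ I := Ideal.subset_span ⟨0, 1, 0, 2, by decide, by decide, rfl⟩
  have hg3 : b * z + y * c ∈ I := Ideal.subset_span ⟨0, 1, 1, 2, by decide, by decide, rfl⟩
  have hg4 : a * v + u * b ∈ I := Ideal.subset_span ⟨0, 2, 0, 1, by decide, by decide, rfl⟩
  have hcomb : (2 : R) * (c * y * u) ^ 2 =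
      (c * z * u * v) * (a * y + x * b) + (c * y * u * v) * (a * z + x * c)
        + (2 * c * y * u ^ 2 - c * x * u * v) * (b * z + y * c)
        - (2 * c * y * z * u) * (a * v + u * b) := by ring
  have h2mem : (2 : R) * (c * y * u) ^ 2 ∈ I := by
    rw [hcomb]
    exact sub_mem (add_mem (add_mem (Ideal.mul_mem_left _ _ hg1) (Ideal.mul_mem_left _ _ hg2))
      (Ideal.mul_mem_left _ _ hg3)) (Ideal.mul_mem_left _ _ hg4)
  have hsq : (c * y * u) ^ 2 ∈ I := by
    have h22 : (C ((2 : F)⁻¹) : R) * 2 = 1 := by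
      rw [show (2 : R) = C (2 : F) from (map_ofNat C 2).symm, ← C_mul, inv_mul_cancel₀ h2, C_1]
    have := Ideal.mul_mem_left I (C ((2 : F)⁻¹)) h2mem
    rwa [← mul_assoc, h22, one_mul] at this
  have hrad : c * y * u ∈ I.radical := Ideal.mem_radical_iff.mpr ⟨2, hsq⟩
  have hnotmem : c * y * u ∉ I := by
    intro hmem
    have := PermAux.lam_span _ hmem 1
    rw [one_mul, PermAux.lam_cyu] at this
    exact one_ne_zero (neg_eq_zero.mp this)
  exact ⟨hrad, hnotmem, fun hR => hnotmem (hR.radical ▸ hrad)⟩
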